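/- Fix α > 0. For n ∈ ℕ let C_n = { n·e^{2πik/(n+1)} ∈ ℂ : k = 0,…,n } ⊂ ℝ², and for x ∈ ℝ² with x ∉ C_n define Z_n(x) = Σ_{y∈C_n} |y − x|^{−2−α}, where |·| is the Euclidean norm. Then there exists a constant a > 1, depending only on α, such that for all integers m, n ≥ 1 with m ≠ n and all x ∈ C_m: if m < n then a^{−1}·(n−m)^{−1−α} ≤ Z_n(x) ≤ a·(n−m)^{−1−α}, and if m > n then a^{−1}·n/(m·(m−n)^{1+α}) ≤ Z_n(x) ≤ a·n/(m·(m−n)^{1+α}). -/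

import Mathlib

open Complex

/-- The finite set `C_n = { n·e^{2πik/(n+1)} : k = 0,…,n } ⊆ ℂ`. -/
noncomputable def circFin (n : ℕ) : Finset ℂ :=
  (Finset.range (n + 1)).image
    (fun k : ℕ => (n : ℂ) * Complex.exp (2 * (Real.pi : ℂ) * Complex.I * (k : ℂ) / ((n : ℂ) + 1)))

/-- `Z_n(x) = Σ_{y ∈ C_n} |y − x|^{−2−α}`. -/
noncomputable def Zcirc (α : ℝ) (n : ℕ) (x : ℂ) : ℝ :=
  ∑ y ∈ circFin n, ‖y - x‖ ^ (-(2 + α))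

namespace ZP

open Finset Real

noncomputable def pt (n k : ℕ) : ℂ :=
  (n : ℂ) * Complex.exp (2 * (Real.pi : ℂ) * Complex.I * (k : ℂ) / ((n : ℂ) + 1))

lemma circFin_eq (n : ℕ) : circFin n = (Finset.range (n+1)).image (pt n) := rfl

lemma pt_eq (n k : ℕ) :
    pt n k = (n:ℂ) * Complex.exp (((2 * Real.pi * k / (n+1) : ℝ) : ℂ) * Complex.I) := by
  rw [pt]
  congr 2
  push_cast
  ring

lemma abs_pt (n k : ℕ) : ‖pt n k‖ = n := by
  rw [pt_eq, norm_mul, Complex.norm_exp_ofReal_mul_I, Complex.norm_natCast, mul_one]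

lemma pt_eq' (n k : ℕ) :
    pt n k = ((n * Real.cos (2*Real.pi*k/(n+1)) : ℝ) : ℂ)
      + ((n * Real.sin (2*Real.pi*k/(n+1)) : ℝ) : ℂ) * Complex.I := by
  rw [pt_eq, Complex.exp_mul_I, ← Complex.ofReal_cos, ← Complex.ofReal_sin]
  push_cast
  ring

lemma dist_sq (n m k j : ℕ) :
    ‖pt n k - pt m j‖ ^ 2
      = ((n:ℝ) - m)^2
        + 4*n*m*(Real.sin (Real.pi * ((k:ℝ)/(n+1) - (j:ℝ)/(m+1))))^2 := by
  have h : pt n k - pt m j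
      = ((((n:ℝ)*Real.cos (2*Real.pi*(k:ℝ)/(n+1)) - m*Real.cos (2*Real.pi*(j:ℝ)/(m+1)) : ℝ)) : ℂ)
        + (((n:ℝ)*Real.sin (2*Real.pi*(k:ℝ)/(n+1)) - m*Real.sin (2*Real.pi*(j:ℝ)/(m+1)) : ℝ) : ℂ) * Complex.I := by
    rw [pt_eq' n k, pt_eq' m j]
    apply Complex.ext <;> simp <;> ring
  set a := 2*Real.pi*(k:ℝ)/(n+1) with ha
  set b := 2*Real.pi*(j:ℝ)/(m+1) with hb
  rw [h, Complex.sq_norm, Complex.normSq_add_mul_I]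
  have harg : Real.pi * ((k:ℝ)/(n+1) - (j:ℝ)/(m+1)) = (a - b)/2 := by
    rw [ha, hb]; ring
  rw [harg]
  have h1 : Real.cos (a - b) = Real.cos a * Real.cos b + Real.sin a * Real.sin b :=
    Real.cos_sub a b
  have h2 : Real.cos (a - b) = 1 - 2 * Real.sin ((a-b)/2)^2 := by
    have hc := Real.cos_two_mul ((a-b)/2)
    have hs := Real.sin_sq_add_cos_sq ((a-b)/2)
    rw [show 2*((a-b)/2) = a - b by ring] at hc
    nlinarith
  have hsn := Real.sin_sq_add_cos_sq a
  have hsm := Real.sin_sq_add_cos_sq b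
  linear_combination ((n:ℝ)^2)*hsn + ((m:ℝ)^2)*hsm
    + (2*(n:ℝ)*(m:ℝ))*h1 - (2*(n:ℝ)*(m:ℝ))*h2

lemma pt_injOn (n : ℕ) (hn : 1 ≤ n) :
    ∀ k ∈ Finset.range (n+1), ∀ l ∈ Finset.range (n+1), pt n k = pt n l → k = l := by
  intro k hk l hl h
  rw [Finset.mem_range] at hk hl
  rw [pt_eq, pt_eq] at h
  have hn0 : (n:ℂ) ≠ 0 := by
    exact_mod_cast Nat.cast_ne_zero.mpr (by omega)
  have h2 := mul_left_cancel₀ hn0 h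
  rw [Complex.exp_eq_exp_iff_exists_int] at h2
  obtain ⟨t, ht⟩ := h2
  have him : 2*Real.pi*(k:ℝ)/(n+1) = 2*Real.pi*(l:ℝ)/(n+1) + t*(2*Real.pi) := by
    have h3 := congrArg Complex.im ht
    simp only [Complex.mul_im, Complex.ofReal_re, Complex.ofReal_im, Complex.I_re, Complex.I_im,
      Complex.add_im, Complex.mul_re, Complex.intCast_re, Complex.intCast_im,
      Complex.re_ofNat, Complex.im_ofNat] at h3
    linarith
  -- him : 2 * π * k / (n+1) = 2 * π * l / (n+1) + t * (2*π)  (roughly)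
  have hpi : (0:ℝ) < Real.pi := Real.pi_pos
  have hN : (0:ℝ) < (n:ℝ)+1 := by positivity
  have hkl : (k:ℝ) = l + t*(n+1) := by
    field_simp at him
    nlinarith [him]
  have hbound1 : (k:ℝ) ≤ n := by exact_mod_cast Nat.lt_succ_iff.mp hk
  have hbound2 : (l:ℝ) ≤ n := by exact_mod_cast Nat.lt_succ_iff.mp hl
  have hk0 : (0:ℝ) ≤ k := Nat.cast_nonneg k
  have hl0 : (0:ℝ) ≤ l := Nat.cast_nonneg l
  have ht1 : ((-1:ℤ):ℝ) < t := by
    by_contra hc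
    push_neg at hc
    have : (t:ℝ) ≤ -1 := by exact_mod_cast hc
    nlinarith
  have ht2 : (t:ℝ) < ((1:ℤ):ℝ) := by
    by_contra hc
    push_neg at hc
    have : (1:ℝ) ≤ t := by exact_mod_cast hc
    nlinarith
  have ht0 : t = 0 := by
    have a1 : (-1:ℤ) < t := by exact_mod_cast ht1
    have a2 : t < 1 := by exact_mod_cast ht2
    omega
  rw [ht0] at hkl
  have : (k:ℝ) = l := by push_cast at hkl; linarith
  exact_mod_cast this

lemma Zsum (α : ℝ) (n : ℕ) (hn : 1 ≤ n) (x : ℂ) :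
    Zcirc α n x = ∑ k ∈ Finset.range (n+1), ‖pt n k - x‖ ^ (-(2+α)) := by
  rw [Zcirc, circFin_eq, Finset.sum_image (pt_injOn n hn)]

lemma card_circFin (n : ℕ) (hn : 1 ≤ n) : (circFin n).card = n + 1 := by
  rw [circFin_eq, Finset.card_image_of_injOn, Finset.card_range]
  intro k hk l hl h
  exact pt_injOn n hn k (by simpa using hk) l (by simpa using hl) h

lemma mem_circFin {m : ℕ} {x : ℂ} (hx : x ∈ circFin m) : ∃ j ≤ m, x = pt m j := by
  rw [circFin_eq, Finset.mem_image] at hx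
  obtain ⟨j, hj, hx⟩ := hx
  exact ⟨j, Nat.lt_succ_iff.mp (Finset.mem_range.mp hj), hx.symm⟩

lemma neg_one_zpow_mul_sq (t : ℝ) (z : ℤ) : ((-1:ℝ)^z * t)^2 = t^2 := by
  rcases Int.even_or_odd z with hz | hz
  · rw [hz.neg_one_zpow]; ring
  · rw [Odd.neg_one_zpow hz]; ring

lemma sin_sq_shift (n : ℕ) (b : ℝ) (hb : 0 ≤ b) :
    ∃ γ : ℝ, 0 ≤ γ ∧ γ < 1 ∧ ∀ H : ℝ → ℝ,
      ∑ k ∈ Finset.range (n+1), H ((Real.sin (Real.pi * ((k:ℝ)/(n+1) - b)))^2)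
        = ∑ i ∈ Finset.range (n+1), H ((Real.sin (Real.pi * ((i:ℝ)+γ)/(n+1)))^2) := by
  have hN0 : 0 < n + 1 := Nat.succ_pos n
  have hNR : (0:ℝ) < (n:ℝ) + 1 := by positivity
  set β := b * ((n:ℝ)+1) with hβdef
  have hβ : 0 ≤ β := by positivity
  set q := ⌈β⌉₊ with hq
  refine ⟨(q:ℝ) - β, by simpa using Nat.le_ceil β,
    by have := Nat.ceil_lt_add_one hβ; simp only [← hq] at this; linarith, ?_⟩
  intro H
  set c : Fin (n+1) := ⟨q % (n+1), Nat.mod_lt q hN0⟩ with hc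
  have key : ∀ i < n+1, (Real.sin (Real.pi * ((((i + q % (n+1)) % (n+1) : ℕ):ℝ)/((n:ℝ)+1) - b)))^2
      = (Real.sin (Real.pi * ((i:ℝ) + ((q:ℝ) - β))/((n:ℝ)+1)))^2 := by
    intro i hi
    have hk2 : (i + q % (n+1)) % (n+1) = (i + q) % (n+1) := by
      conv_rhs => rw [Nat.add_mod]
      rw [Nat.mod_eq_of_lt hi]
    have hdm : (n+1) * ((i+q)/(n+1)) + (i + q % (n+1)) % (n+1) = i + q := by
      rw [hk2]; exact Nat.div_add_mod (i+q) (n+1)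
    set L := (i + q) / (n+1) with hL
    have hcast : (((i + q % (n+1)) % (n+1) : ℕ):ℝ) = (i:ℝ) + q - ((n:ℝ)+1)*L := by
      have h5 := congrArg (fun x : ℕ => (x:ℝ)) hdm
      push_cast at h5
      linarith
    have hb' : b = β / ((n:ℝ)+1) := by rw [hβdef]; field_simp
    have hangle : Real.pi * ((((i + q % (n+1)) % (n+1) : ℕ):ℝ)/((n:ℝ)+1) - b)
        = Real.pi * ((i:ℝ) + ((q:ℝ) - β))/((n:ℝ)+1) - (L:ℤ) * Real.pi := by
      rw [hcast]
      rw [hb']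
      push_cast
      field_simp
      ring
    rw [hangle, Real.sin_sub_int_mul_pi, neg_one_zpow_mul_sq]
  rw [← Fin.sum_univ_eq_sum_range (fun k : ℕ => H ((Real.sin (Real.pi * ((k:ℝ)/((n:ℝ)+1) - b)))^2)) (n+1),
      ← Fin.sum_univ_eq_sum_range (fun i : ℕ => H ((Real.sin (Real.pi * ((i:ℝ)+((q:ℝ) - β))/((n:ℝ)+1)))^2)) (n+1)]
  have main : ∀ i : Fin (n+1),
      H ((Real.sin (Real.pi * (((i.val:ℝ))+((q:ℝ) - β))/((n:ℝ)+1)))^2)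
        = H ((Real.sin (Real.pi * ((((i + c).val:ℕ):ℝ)/((n:ℝ)+1) - b)))^2) := by
    intro i
    have hv : (i + c).val = (i.val + q % (n+1)) % (n+1) := by
      simp [hc, Fin.add_def]
    rw [hv, key i.val i.isLt]
  exact (Fintype.sum_bijective (fun i => i + c) (Equiv.addRight c).bijective _ _ main).symm

lemma rpow_anti {x y : ℝ} (hx : 0 < x) (hxy : x ≤ y) {c : ℝ} (hc : c ≤ 0) :
    y ^ c ≤ x ^ c :=
  Real.rpow_le_rpow_of_nonpos hx hxy hc

lemma rpow_sq_half (A e : ℝ) (hA : 0 ≤ A) : (A^2) ^ (e/2) = A ^ e := by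
  rw [← Real.rpow_natCast A 2, ← Real.rpow_mul hA]
  congr 1
  push_cast
  ring

lemma sin_sq_le_sq (x : ℝ) (hx : 0 ≤ x) (hs : 0 ≤ Real.sin x) : (Real.sin x)^2 ≤ x^2 := by
  have h1 : Real.sin x ≤ x := by
    rcases eq_or_lt_of_le hx with h | h
    · rw [← h]; simp
    · exact (Real.sin_lt h).le
  exact pow_le_pow_left₀ hs h1 2

lemma sin_lb (n : ℕ) (γ : ℝ) (hγ0 : 0 ≤ γ) (hγ1 : γ < 1) (i : ℕ) (hi : i ≤ n) :
    2 * (min (i:ℝ) ((n:ℝ)-i)) / ((n:ℝ)+1) ≤ Real.sin (Real.pi * ((i:ℝ)+γ)/((n:ℝ)+1)) := by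
  have hNR : (0:ℝ) < (n:ℝ)+1 := by positivity
  have hin : (i:ℝ) ≤ n := by exact_mod_cast hi
  set t := ((i:ℝ)+γ)/((n:ℝ)+1) with ht
  have ht0 : 0 ≤ t := by positivity
  have ht1 : t < 1 := by
    rw [ht, div_lt_one hNR]
    linarith
  have hμi : min (i:ℝ) ((n:ℝ)-i) ≤ i := min_le_left _ _
  have hμn : min (i:ℝ) ((n:ℝ)-i) ≤ (n:ℝ)-i := min_le_right _ _
  have harg : Real.pi * ((i:ℝ)+γ)/((n:ℝ)+1) = Real.pi * t := by rw [ht]; ring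
  rw [harg]
  rcases le_or_gt t (1/2) with hhalf | hhalf
  · have h1 : 2/Real.pi * (Real.pi * t) ≤ Real.sin (Real.pi * t) :=
      Real.mul_le_sin (by positivity) (by nlinarith [Real.pi_pos])
    have h2 : 2/Real.pi * (Real.pi * t) = 2*t := by
      field_simp
    rw [h2] at h1
    refine le_trans ?_ h1
    have hdiv : t*((n:ℝ)+1) = (i:ℝ)+γ := by rw [ht]; field_simp
    rw [div_le_iff₀ hNR]
    nlinarith
  · have hsub : Real.sin (Real.pi * t) = Real.sin (Real.pi * (1 - t)) := by
      rw [show Real.pi * (1 - t) = Real.pi - Real.pi * t by ring, Real.sin_pi_sub]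
    have h1 : 2/Real.pi * (Real.pi * (1-t)) ≤ Real.sin (Real.pi * (1-t)) :=
      Real.mul_le_sin (by nlinarith [Real.pi_pos]) (by nlinarith [Real.pi_pos])
    have h2 : 2/Real.pi * (Real.pi * (1-t)) = 2*(1-t) := by
      field_simp
    rw [h2] at h1
    rw [hsub]
    refine le_trans ?_ h1
    have hdiv : t*((n:ℝ)+1) = (i:ℝ)+γ := by rw [ht]; field_simp
    rw [div_le_iff₀ hNR]
    nlinarith
  
lemma sin_arg_nonneg (n : ℕ) (γ : ℝ) (hγ0 : 0 ≤ γ) (hγ1 : γ < 1) (i : ℕ) (hi : i ≤ n) :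
    0 ≤ Real.sin (Real.pi * ((i:ℝ)+γ)/((n:ℝ)+1)) := by
  have hNR : (0:ℝ) < (n:ℝ)+1 := by positivity
  have hin : (i:ℝ) ≤ n := by exact_mod_cast hi
  apply Real.sin_nonneg_of_nonneg_of_le_pi
  · positivity
  · rw [div_le_iff₀ hNR]
    nlinarith [Real.pi_pos]

lemma bern_step (α : ℝ) (hα : 0 < α) (b : ℝ) (hb : 2 ≤ b) :
    (1+α) * b ^ (-(2+α)) ≤ (b-1)^(-(1+α)) - b^(-(1+α)) := by
  have hb0 : (0:ℝ) < b := by linarith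
  have hbm : (0:ℝ) < b - 1 := by linarith
  set s := 1/(b-1) with hs
  have hs0 : 0 < s := by positivity
  have hbern : 1 + (1+α) * s ≤ (1+s)^(1+α) :=
    one_add_mul_self_le_rpow_one_add (by linarith) (by linarith)
  have h1s : 1 + s = b / (b-1) := by rw [hs]; field_simp; ring
  have hkey : (b-1)^(-(1+α)) = b^(-(1+α)) * (1+s)^(1+α) := by
    rw [h1s, Real.div_rpow hb0.le hbm.le, Real.rpow_neg hbm.le, Real.rpow_neg hb0.le]
    have hbp : 0 < b ^ (1+α) := Real.rpow_pos_of_pos hb0 _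
    have hbmp : 0 < (b-1) ^ (1+α) := Real.rpow_pos_of_pos hbm _
    field_simp
  have hBpos : 0 < b^(-(1+α)) := Real.rpow_pos_of_pos hb0 _
  have h2 : b^(-(1+α)) * ((1+α)*s) ≤ (b-1)^(-(1+α)) - b^(-(1+α)) := by
    rw [hkey]
    nlinarith
  refine le_trans ?_ h2
  have hsplit : b^(-(2+α)) = b^(-(1+α)) * b⁻¹ := by
    rw [← Real.rpow_neg_one b, ← Real.rpow_add hb0]
    congr 1
    ring
  rw [hsplit]
  have hsb : b⁻¹ ≤ s := by
    rw [hs, one_div]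
    exact inv_anti₀ hbm (by linarith)
  have hb1 : 0 < b⁻¹ := by positivity
  nlinarith [mul_le_mul_of_nonneg_left hsb (by positivity : (0:ℝ) ≤ (1+α) * b^(-(1+α)))]

lemma tail_sum (α : ℝ) (hα : 0 < α) (d : ℝ) (hd : 1 ≤ d) (K : ℕ) :
    ∑ j ∈ Finset.range K, (d + 1 + (j:ℝ)) ^ (-(2+α)) ≤ d ^ (-(1+α)) / (1+α) := by
  have hα1 : (0:ℝ) < 1 + α := by linarith
  set f : ℕ → ℝ := fun j => (d + j)^(-(1+α)) with hf
  have hstep : ∀ j : ℕ, (d + 1 + (j:ℝ))^(-(2+α)) ≤ (f j - f (j+1)) / (1+α) := by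
    intro j
    have hb : 2 ≤ d + 1 + (j:ℝ) := by
      have : (0:ℝ) ≤ j := Nat.cast_nonneg j
      linarith
    have hbs := bern_step α hα (d + 1 + (j:ℝ)) hb
    rw [le_div_iff₀ hα1]
    have hfj : f j = (d + 1 + (j:ℝ) - 1)^(-(1+α)) := by
      simp only [hf]
      congr 1
      ring
    have hfj1 : f (j+1) = (d + 1 + (j:ℝ))^(-(1+α)) := by
      simp only [hf]
      congr 1
      push_cast
      ring
    rw [hfj, hfj1]
    linarith
  calc ∑ j ∈ Finset.range K, (d + 1 + (j:ℝ)) ^ (-(2+α))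
      ≤ ∑ j ∈ Finset.range K, (f j - f (j+1)) / (1+α) :=
        Finset.sum_le_sum (fun j _ => hstep j)
    _ = (∑ j ∈ Finset.range K, (f j - f (j+1))) / (1+α) := by rw [Finset.sum_div]
    _ = (f 0 - f K) / (1+α) := by rw [Finset.sum_range_sub' f K]
    _ ≤ f 0 / (1+α) := by
        have h0 : 0 ≤ f K := Real.rpow_nonneg (by positivity) _
        gcongr
        linarith
    _ = d ^ (-(1+α)) / (1+α) := by rw [hf]; norm_num

lemma rpow_sq_neg (A : ℝ) (hA : 0 ≤ A) (c : ℝ) : (A^2) ^ (-c/2) = A ^ (-c) :=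
  rpow_sq_half A (-c) hA

lemma exp_neg_half (α : ℝ) (hα : 0 < α) : -(2+α)/2 ≤ 0 := by linarith

lemma d_mul_rpow (α : ℝ) (d : ℝ) (hd0 : 0 < d) : d * d^(-(2+α)) = d^(-(1+α)) := by
  rw [show -(1+α) = 1 + -(2+α) by ring, Real.rpow_add hd0, Real.rpow_one]

lemma coreUpper (α : ℝ) (hα : 0 < α) (n m d : ℕ) (γ : ℝ) (hγ0 : 0 ≤ γ) (hγ1 : γ < 1)
    (hn : 1 ≤ n) (hm : 1 ≤ m) (hd : 1 ≤ d) (hdn : d ≤ n) (hcomp : n < 4 * m) :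
    ∑ i ∈ Finset.range (n+1),
        (((d:ℝ))^2 + 4*(n:ℝ)*(m:ℝ)*(Real.sin (Real.pi*((i:ℝ)+γ)/((n:ℝ)+1)))^2) ^ (-(2+α)/2)
      ≤ 6 * (d:ℝ) ^ (-(1+α)) := by
  have hdR : (1:ℝ) ≤ d := by exact_mod_cast hd
  have hd0 : (0:ℝ) < d := by linarith
  have hp2 : -(2+α)/2 ≤ 0 := exp_neg_half α hα
  have hptw : ∀ i ∈ Finset.range (n+1),
      (((d:ℝ))^2 + 4*(n:ℝ)*(m:ℝ)*(Real.sin (Real.pi*((i:ℝ)+γ)/((n:ℝ)+1)))^2) ^ (-(2+α)/2)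
        ≤ (max (d:ℝ) (i:ℝ)) ^ (-(2+α)) + (max (d:ℝ) ((n:ℝ)-(i:ℝ))) ^ (-(2+α)) := by
    intro i hi
    have hi' : i ≤ n := Nat.lt_succ_iff.mp (Finset.mem_range.mp hi)
    have hiR : (i:ℝ) ≤ n := by exact_mod_cast hi'
    set S := Real.sin (Real.pi*((i:ℝ)+γ)/((n:ℝ)+1)) with hS
    set μ := min (i:ℝ) ((n:ℝ)-i) with hμ
    have hμ0 : 0 ≤ μ := le_min (Nat.cast_nonneg i) (by linarith)
    have hs1 : 2*μ/((n:ℝ)+1) ≤ S := sin_lb n γ hγ0 hγ1 i hi'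
    have hs0 : 0 ≤ S := sin_arg_nonneg n γ hγ0 hγ1 i hi'
    have hkey : μ^2 ≤ 4*(n:ℝ)*(m:ℝ)*S^2 := by
      have h1 : (2*μ/((n:ℝ)+1))^2 ≤ S^2 := pow_le_pow_left₀ (by positivity) hs1 2
      have hE : (0:ℝ) < ((n:ℝ)+1)^2 := by positivity
      have h1'' : (2*μ/((n:ℝ)+1))^2 = 4*μ^2/(((n:ℝ)+1)^2) := by
        rw [div_pow]; ring
      rw [h1'', div_le_iff₀ hE] at h1
      have hnm : ((n:ℝ)+1)^2 ≤ 16*(n:ℝ)*(m:ℝ) := by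
        have h4 : (n:ℝ) < 4*m := by exact_mod_cast hcomp
        have hn1 : (1:ℝ) ≤ n := by exact_mod_cast hn
        nlinarith
      nlinarith [mul_le_mul_of_nonneg_left hnm (sq_nonneg S)]
    have hbase : (max (d:ℝ) μ)^2 ≤ (d:ℝ)^2 + 4*(n:ℝ)*(m:ℝ)*S^2 := by
      rcases max_cases (d:ℝ) μ with ⟨h,_⟩|⟨h,_⟩
      · rw [h]; nlinarith [sq_nonneg μ]
      · rw [h]; nlinarith [sq_nonneg (d:ℝ)]
    have hMpos : (0:ℝ) < max (d:ℝ) μ := lt_of_lt_of_le hd0 (le_max_left _ _)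
    have hterm : ((d:ℝ)^2 + 4*(n:ℝ)*(m:ℝ)*S^2) ^ (-(2+α)/2) ≤ (max (d:ℝ) μ)^(-(2+α)) := by
      have h7 := rpow_anti (by positivity : (0:ℝ) < (max (d:ℝ) μ)^2) hbase hp2
      rwa [rpow_sq_neg _ hMpos.le (2+α)] at h7
    refine le_trans hterm ?_
    rcases min_cases (i:ℝ) ((n:ℝ)-i) with ⟨h,_⟩|⟨h,_⟩
    · rw [hμ, h]
      have h8 : 0 ≤ (max (d:ℝ) ((n:ℝ)-i))^(-(2+α)) :=
        Real.rpow_nonneg (le_trans hd0.le (le_max_left _ _)) _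
      linarith
    · rw [hμ, h]
      have h8 : 0 ≤ (max (d:ℝ) (i:ℝ))^(-(2+α)) :=
        Real.rpow_nonneg (le_trans hd0.le (le_max_left _ _)) _
      linarith
  have hsum1 := Finset.sum_le_sum hptw
  rw [Finset.sum_add_distrib] at hsum1
  have hrefl : ∑ i ∈ Finset.range (n+1), (max (d:ℝ) ((n:ℝ)-(i:ℝ)))^(-(2+α))
      = ∑ i ∈ Finset.range (n+1), (max (d:ℝ) (i:ℝ))^(-(2+α)) := by
    rw [← Finset.sum_range_reflect (fun j => (max (d:ℝ) (j:ℝ))^(-(2+α))) (n+1)]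
    apply Finset.sum_congr rfl
    intro i hi
    have hi' : i ≤ n := Nat.lt_succ_iff.mp (Finset.mem_range.mp hi)
    have : ((n + 1 - 1 - i : ℕ):ℝ) = (n:ℝ) - (i:ℝ) := by
      rw [show n + 1 - 1 - i = n - i by omega, Nat.cast_sub hi']
    rw [this]
  have hT : ∑ i ∈ Finset.range (n+1), (max (d:ℝ) (i:ℝ))^(-(2+α)) ≤ 3 * (d:ℝ)^(-(1+α)) := by
    have hsubset : Finset.range (n+1) ⊆ Finset.range (d+1) ∪ Finset.Ico (d+1) (n+1) := by
      intro i hi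
      simp only [Finset.mem_range, Finset.mem_union, Finset.mem_Ico] at *
      omega
    have h1 : ∑ i ∈ Finset.range (n+1), (max (d:ℝ) (i:ℝ))^(-(2+α))
        ≤ ∑ i ∈ (Finset.range (d+1) ∪ Finset.Ico (d+1) (n+1)), (max (d:ℝ) (i:ℝ))^(-(2+α)) :=
      Finset.sum_le_sum_of_subset_of_nonneg hsubset
        (fun i _ _ => Real.rpow_nonneg (le_trans hd0.le (le_max_left _ _)) _)
    have hdisj : Disjoint (Finset.range (d+1)) (Finset.Ico (d+1) (n+1)) := by
      simp only [Finset.disjoint_left, Finset.mem_range, Finset.mem_Ico]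
      omega
    rw [Finset.sum_union hdisj] at h1
    have h2 : ∑ i ∈ Finset.range (d+1), (max (d:ℝ) (i:ℝ))^(-(2+α)) ≤ ((d:ℝ)+1) * (d:ℝ)^(-(2+α)) := by
      have h9 := Finset.sum_le_card_nsmul (Finset.range (d+1))
        (fun i => (max (d:ℝ) (i:ℝ))^(-(2+α))) ((d:ℝ)^(-(2+α)))
        (fun i _ => rpow_anti hd0 (le_max_left _ _) (by linarith))
      rw [Finset.card_range, nsmul_eq_mul] at h9
      push_cast at h9
      linarith
    have h3 : ∑ i ∈ Finset.Ico (d+1) (n+1), (max (d:ℝ) (i:ℝ))^(-(2+α)) ≤ (d:ℝ)^(-(1+α))/(1+α) := by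
      have heq : ∀ i ∈ Finset.Ico (d+1) (n+1), (max (d:ℝ) (i:ℝ))^(-(2+α)) = ((i:ℝ))^(-(2+α)) := by
        intro i hi
        obtain ⟨h1', _⟩ := Finset.mem_Ico.mp hi
        congr 1
        exact max_eq_right (by exact_mod_cast Nat.le_of_succ_le h1')
      rw [Finset.sum_congr rfl heq, Finset.sum_Ico_eq_sum_range]
      have heq2 : ∀ j ∈ Finset.range (n+1-(d+1)), (((d+1+j:ℕ)):ℝ)^(-(2+α)) = ((d:ℝ)+1+(j:ℝ))^(-(2+α)) := by
        intro j _
        congr 1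
        push_cast
        ring
      rw [Finset.sum_congr rfl heq2]
      exact tail_sum α hα (d:ℝ) hdR _
    have hmul := d_mul_rpow α (d:ℝ) hd0
    have h6 : 0 ≤ (d:ℝ)^(-(2+α)) := Real.rpow_nonneg hd0.le _
    have hdd : ((d:ℝ)+1) * (d:ℝ)^(-(2+α)) ≤ 2 * (d:ℝ)^(-(1+α)) := by
      nlinarith
    have hquot : (d:ℝ)^(-(1+α))/(1+α) ≤ (d:ℝ)^(-(1+α)) :=
      div_le_self (Real.rpow_nonneg hd0.le _) (by linarith)
    linarith
  rw [hrefl] at hsum1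
  linarith

set_option maxHeartbeats 1000000 in
lemma coreLower (α : ℝ) (hα : 0 < α) (n m d : ℕ) (γ : ℝ) (hγ0 : 0 ≤ γ) (hγ1 : γ < 1)
    (hn : 1 ≤ n) (hm : 1 ≤ m) (hd : 1 ≤ d) (hdn : d ≤ n) (hm2n : m ≤ 2*n) :
    (16 * (20:ℝ)^(2+α))⁻¹ * (d:ℝ)^(-(1+α))
      ≤ ∑ i ∈ Finset.range (n+1),
          (((d:ℝ))^2 + 4*(n:ℝ)*(m:ℝ)*(Real.sin (Real.pi*((i:ℝ)+γ)/((n:ℝ)+1)))^2) ^ (-(2+α)/2) := by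
  have hdR : (1:ℝ) ≤ d := by exact_mod_cast hd
  have hd0 : (0:ℝ) < d := by linarith
  have hnR : (1:ℝ) ≤ n := by exact_mod_cast hn
  have hmR : (1:ℝ) ≤ m := by exact_mod_cast hm
  have hm2nR : (m:ℝ) ≤ 2*n := by exact_mod_cast hm2n
  have hp2 : -(2+α)/2 ≤ 0 := exp_neg_half α hα
  have hπ := Real.pi_pos
  have hπ315 : Real.pi < 3.15 := Real.pi_lt_d2
  have hpisq : Real.pi^2 ≤ 10 := by nlinarith [mul_self_nonneg ((3.15:ℝ) - Real.pi)]
  have hNR : (0:ℝ) < (n:ℝ)+1 := by positivity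
  have hNR2 : (0:ℝ) < ((n:ℝ)+1)^2 := by positivity
  have hfrac : 4*(n:ℝ)*m/((n:ℝ)+1)^2 ≤ 8 := by
    rw [div_le_iff₀ hNR2]
    nlinarith
  have hterm_nonneg : ∀ i ∈ Finset.range (n+1),
      0 ≤ (((d:ℝ))^2 + 4*(n:ℝ)*(m:ℝ)*(Real.sin (Real.pi*((i:ℝ)+γ)/((n:ℝ)+1)))^2) ^ (-(2+α)/2) := by
    intro i _
    exact Real.rpow_nonneg (by positivity) _
  have h20pos : (0:ℝ) < (20:ℝ)^(2+α) := Real.rpow_pos_of_pos (by norm_num) _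
  by_cases hd16 : d ≤ 16
  · -- small d: use the single term i = n
    have hsingle := Finset.single_le_sum hterm_nonneg (Finset.self_mem_range_succ n)
    set S := Real.sin (Real.pi*((n:ℝ)+γ)/((n:ℝ)+1)) with hSdef
    have hsin_eq : S = Real.sin (Real.pi*(1-γ)/((n:ℝ)+1)) := by
      rw [hSdef, ← Real.sin_pi_sub]
      congr 1
      field_simp
      ring
    have harg0 : 0 ≤ Real.pi*(1-γ)/((n:ℝ)+1) := by
      have : 0 ≤ 1 - γ := by linarith
      positivity
    have hs_le : S^2 ≤ (Real.pi/((n:ℝ)+1))^2 := by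
      rw [hsin_eq]
      refine le_trans (sin_sq_le_sq _ harg0 ?_) ?_
      · apply Real.sin_nonneg_of_nonneg_of_le_pi harg0
        rw [div_le_iff₀ hNR]
        nlinarith
      · apply pow_le_pow_left₀ harg0 ?_ 2
        rw [div_le_div_iff₀ hNR hNR]
        nlinarith [mul_nonneg (mul_nonneg hπ.le hγ0) hNR.le]
    have hbase_le : (d:ℝ)^2 + 4*(n:ℝ)*(m:ℝ)*S^2 ≤ 361 := by
      have h1 : 4*(n:ℝ)*m*S^2 ≤ 4*(n:ℝ)*m*(Real.pi/((n:ℝ)+1))^2 :=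
        mul_le_mul_of_nonneg_left hs_le (by positivity)
      have heq3 : 4*(n:ℝ)*m*(Real.pi/((n:ℝ)+1))^2 = (4*(n:ℝ)*m/((n:ℝ)+1)^2)*Real.pi^2 := by
        rw [div_pow]
        ring
      have h2 : 4*(n:ℝ)*m*(Real.pi/((n:ℝ)+1))^2 ≤ 8*Real.pi^2 := by
        rw [heq3]
        exact mul_le_mul_of_nonneg_right hfrac (sq_nonneg Real.pi)
      have h3 : (d:ℝ)^2 ≤ 256 := by
        have : (d:ℝ) ≤ 16 := by exact_mod_cast hd16
        nlinarith
      linarith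
    have hb0 : (0:ℝ) < (d:ℝ)^2 + 4*(n:ℝ)*(m:ℝ)*S^2 := by positivity
    have hterm_ge : ((19:ℝ))^(-(2+α)) ≤ ((d:ℝ)^2 + 4*(n:ℝ)*(m:ℝ)*S^2) ^ (-(2+α)/2) := by
      have h7 := rpow_anti hb0 hbase_le hp2
      rwa [show (361:ℝ) = 19^2 by norm_num, rpow_sq_neg 19 (by norm_num) (2+α)] at h7
    have hfinal : (16 * (20:ℝ)^(2+α))⁻¹ * (d:ℝ)^(-(1+α)) ≤ (19:ℝ)^(-(2+α)) := by
      have h1 : (d:ℝ)^(-(1+α)) ≤ 1 := Real.rpow_le_one_of_one_le_of_nonpos hdR (by linarith)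
      have h2 : (16 * (20:ℝ)^(2+α))⁻¹ ≤ (19:ℝ)^(-(2+α)) := by
        rw [Real.rpow_neg (by norm_num : (0:ℝ) ≤ 19)]
        apply inv_anti₀ (Real.rpow_pos_of_pos (by norm_num) _)
        have h3 : (19:ℝ)^(2+α) ≤ (20:ℝ)^(2+α) :=
          Real.rpow_le_rpow (by norm_num) (by norm_num) (by linarith)
        nlinarith
      have h4 : (0:ℝ) ≤ (16 * (20:ℝ)^(2+α))⁻¹ := by positivity
      nlinarith [Real.rpow_nonneg hd0.le (-(1+α))]
    exact le_trans hfinal (le_trans hterm_ge hsingle)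
  · -- large d
    push_neg at hd16
    set K := d / 8 with hK
    have hK2 : 2 ≤ K := by omega
    have hKn : K ≤ n := le_trans (Nat.div_le_self d 8) hdn
    have hsub : Finset.range K ⊆ Finset.range (n+1) := by
      intro i hi
      simp only [Finset.mem_range] at hi ⊢
      omega
    have hlow : ∀ i ∈ Finset.range K, ((2*(d:ℝ)))^(-(2+α))
        ≤ (((d:ℝ))^2 + 4*(n:ℝ)*(m:ℝ)*(Real.sin (Real.pi*((i:ℝ)+γ)/((n:ℝ)+1)))^2) ^ (-(2+α)/2) := by
      intro i hi
      have hiK : i < K := Finset.mem_range.mp hi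
      have hi8 : 8*(i+1) ≤ d := by omega
      have hi8R : 8*((i:ℝ)+1) ≤ d := by exact_mod_cast hi8
      have hin : i ≤ n := by omega
      set S := Real.sin (Real.pi*((i:ℝ)+γ)/((n:ℝ)+1)) with hSdef
      have harg0 : 0 ≤ Real.pi*((i:ℝ)+γ)/((n:ℝ)+1) := by positivity
      have hs_le : S^2 ≤ (Real.pi*((i:ℝ)+1)/((n:ℝ)+1))^2 := by
        refine le_trans (sin_sq_le_sq _ harg0 (sin_arg_nonneg n γ hγ0 hγ1 i hin)) ?_
        apply pow_le_pow_left₀ harg0 ?_ 2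
        rw [div_le_div_iff₀ hNR hNR]
        nlinarith [mul_nonneg (mul_nonneg hπ.le (by linarith : (0:ℝ) ≤ 1 - γ)) hNR.le]
      have hbase_le : (d:ℝ)^2 + 4*(n:ℝ)*(m:ℝ)*S^2 ≤ (2*(d:ℝ))^2 := by
        have h1 : 4*(n:ℝ)*m*S^2 ≤ 4*(n:ℝ)*m*(Real.pi*((i:ℝ)+1)/((n:ℝ)+1))^2 :=
          mul_le_mul_of_nonneg_left hs_le (by positivity)
        have heq3 : 4*(n:ℝ)*m*(Real.pi*((i:ℝ)+1)/((n:ℝ)+1))^2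
            = (4*(n:ℝ)*m/((n:ℝ)+1)^2)*(Real.pi^2*((i:ℝ)+1)^2) := by
          rw [div_pow, mul_pow]
          ring
        have h2 : 4*(n:ℝ)*m*(Real.pi*((i:ℝ)+1)/((n:ℝ)+1))^2 ≤ 8*(Real.pi^2*((i:ℝ)+1)^2) := by
          rw [heq3]
          exact mul_le_mul_of_nonneg_right hfrac (by positivity)
        have h3 : 8*(Real.pi^2*((i:ℝ)+1)^2) ≤ (Real.pi^2/8)*(d:ℝ)^2 := by
          have hsq : (8*((i:ℝ)+1))^2 ≤ (d:ℝ)^2 := pow_le_pow_left₀ (by positivity) hi8R 2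
          nlinarith [mul_le_mul_of_nonneg_left hsq (by positivity : (0:ℝ) ≤ Real.pi^2/8)]
        nlinarith [hpisq]
      have hb0i : (0:ℝ) < (d:ℝ)^2 + 4*(n:ℝ)*(m:ℝ)*S^2 := by positivity
      have h7 := rpow_anti hb0i hbase_le hp2
      rwa [rpow_sq_neg (2*(d:ℝ)) (by positivity) (2+α)] at h7
    have hsum_ge := Finset.sum_le_sum hlow
    rw [Finset.sum_const, Finset.card_range, nsmul_eq_mul] at hsum_ge
    have hmono := Finset.sum_le_sum_of_subset_of_nonneg hsub
      (fun i hi _ => hterm_nonneg i hi)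
    have hKR : (d:ℝ)/16 ≤ (K:ℝ) := by
      have h5 : d ≤ 16*K := by omega
      have h5R : (d:ℝ) ≤ 16*(K:ℝ) := by exact_mod_cast h5
      linarith
    have hval : ((2*(d:ℝ)))^(-(2+α)) = (2:ℝ)^(-(2+α)) * (d:ℝ)^(-(2+α)) :=
      Real.mul_rpow (by norm_num) hd0.le
    have h2p : (0:ℝ) < (2:ℝ)^(-(2+α)) := Real.rpow_pos_of_pos (by norm_num) _
    have hdp : (0:ℝ) < (d:ℝ)^(-(2+α)) := Real.rpow_pos_of_pos hd0 _
    have hmul := d_mul_rpow α (d:ℝ) hd0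
    have hc : (16 * (20:ℝ)^(2+α))⁻¹ ≤ (2:ℝ)^(-(2+α))/16 := by
      have h2le : (2:ℝ)^(2+α) ≤ (20:ℝ)^(2+α) :=
        Real.rpow_le_rpow (by norm_num) (by norm_num) (by linarith)
      have h2pos : (0:ℝ) < (2:ℝ)^(2+α) := Real.rpow_pos_of_pos (by norm_num) _
      have hi1 : (16 * (20:ℝ)^(2+α))⁻¹ ≤ (16 * (2:ℝ)^(2+α))⁻¹ :=
        inv_anti₀ (by positivity) (by nlinarith)
      have hi2 : (16 * (2:ℝ)^(2+α))⁻¹ = (2:ℝ)^(-(2+α))/16 := by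
        rw [Real.rpow_neg (by norm_num : (0:ℝ) ≤ 2), mul_inv]
        ring
      linarith
    have hchain : (16 * (20:ℝ)^(2+α))⁻¹ * (d:ℝ)^(-(1+α)) ≤ (K:ℝ) * (2*(d:ℝ))^(-(2+α)) := by
      have hstep1 : (16 * (20:ℝ)^(2+α))⁻¹ * (d:ℝ)^(-(1+α)) ≤ ((2:ℝ)^(-(2+α))/16) * (d:ℝ)^(-(1+α)) :=
        mul_le_mul_of_nonneg_right hc (Real.rpow_nonneg hd0.le _)
      have hstep2 : ((2:ℝ)^(-(2+α))/16) * (d:ℝ)^(-(1+α)) = ((d:ℝ)/16) * ((2*(d:ℝ))^(-(2+α))) := by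
        rw [hval, ← hmul]
        ring
      rw [hstep2] at hstep1
      refine le_trans hstep1 ?_
      apply mul_le_mul_of_nonneg_right hKR (by positivity)
    linarith

lemma triv_upper (α : ℝ) (hα : 0 < α) (n m j : ℕ) (hn : 1 ≤ n) (D : ℝ) (hD0 : 0 < D)
    (hDle : D ≤ |(n:ℝ) - (m:ℝ)|) :
    Zcirc α n (pt m j) ≤ ((n:ℝ)+1) * D ^ (-(2+α)) := by
  rw [Zcirc]
  have hbound : ∀ y ∈ circFin n, ‖y - pt m j‖ ^ (-(2+α)) ≤ D ^ (-(2+α)) := by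
    intro y hy
    obtain ⟨k, hk, rfl⟩ := mem_circFin hy
    have h1 : |(n:ℝ) - (m:ℝ)| ≤ ‖pt n k - pt m j‖ := by
      calc |(n:ℝ) - (m:ℝ)| = |‖pt n k‖ - ‖pt m j‖| := by
            rw [abs_pt n k, abs_pt m j]
        _ ≤ ‖pt n k - pt m j‖ := by
            have h2 := abs_norm_sub_norm_le (pt n k) (pt m j)
            simpa using h2
    exact rpow_anti hD0 (le_trans hDle h1) (by linarith)
  calc ∑ y ∈ circFin n, ‖y - pt m j‖ ^ (-(2+α))
      ≤ (circFin n).card • (D ^ (-(2+α))) := Finset.sum_le_card_nsmul _ _ _ hbound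
    _ ≤ ((n:ℝ)+1) * D ^ (-(2+α)) := by
        have hcard : (circFin n).card ≤ n+1 :=
          le_trans Finset.card_image_le (le_of_eq (Finset.card_range (n+1)))
        rw [nsmul_eq_mul]
        apply mul_le_mul_of_nonneg_right ?_ (Real.rpow_nonneg hD0.le _)
        exact_mod_cast hcard

lemma triv_lower (α : ℝ) (hα : 0 < α) (n m j : ℕ) (hn : 1 ≤ n) (hne : (n:ℝ) ≠ (m:ℝ)) :
    ((n:ℝ)+1) * ((n:ℝ)+(m:ℝ)) ^ (-(2+α)) ≤ Zcirc α n (pt m j) := by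
  have hnR : (1:ℝ) ≤ n := by exact_mod_cast hn
  have hnm0 : (0:ℝ) < (n:ℝ)+m := by
    have : (0:ℝ) ≤ m := Nat.cast_nonneg m
    linarith
  rw [Zsum α n hn]
  have hbound : ∀ k ∈ Finset.range (n+1),
      ((n:ℝ)+(m:ℝ))^(-(2+α)) ≤ ‖pt n k - pt m j‖ ^ (-(2+α)) := by
    intro k hk
    have h1 : ‖pt n k - pt m j‖ ≤ (n:ℝ)+m := by
      calc ‖pt n k - pt m j‖
          ≤ ‖pt n k‖ + ‖pt m j‖ := by
            have := norm_sub_le (pt n k) (pt m j)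
            simpa using this
        _ = (n:ℝ)+m := by rw [abs_pt n k, abs_pt m j]
    have h0 : 0 < ‖pt n k - pt m j‖ := by
      have h2 : |(n:ℝ) - (m:ℝ)| ≤ ‖pt n k - pt m j‖ := by
        calc |(n:ℝ) - (m:ℝ)| = |‖pt n k‖ - ‖pt m j‖| := by
              rw [abs_pt n k, abs_pt m j]
          _ ≤ ‖pt n k - pt m j‖ := by
              have h3 := abs_norm_sub_norm_le (pt n k) (pt m j)
              simpa using h3
      have h4 : 0 < |(n:ℝ) - (m:ℝ)| := abs_pos.mpr (sub_ne_zero.mpr hne)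
      linarith
    exact rpow_anti h0 h1 (by linarith)
  have h5 := Finset.card_nsmul_le_sum (Finset.range (n+1))
    (fun k => ‖pt n k - pt m j‖ ^ (-(2+α))) (((n:ℝ)+(m:ℝ))^(-(2+α))) hbound
  rw [Finset.card_range, nsmul_eq_mul] at h5
  push_cast at h5
  exact h5

lemma Z_repr (α : ℝ) (n m j d : ℕ) (hn : 1 ≤ n)
    (hD : ((n:ℝ) - (m:ℝ))^2 = ((d:ℝ))^2) :
    ∃ γ : ℝ, 0 ≤ γ ∧ γ < 1 ∧
      Zcirc α n (pt m j) = ∑ i ∈ Finset.range (n+1),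
        (((d:ℝ))^2 + 4*(n:ℝ)*(m:ℝ)*(Real.sin (Real.pi*((i:ℝ)+γ)/((n:ℝ)+1)))^2) ^ (-(2+α)/2) := by
  obtain ⟨γ, hγ0, hγ1, hbij⟩ := sin_sq_shift n ((j:ℝ)/((m:ℝ)+1)) (by positivity)
  refine ⟨γ, hγ0, hγ1, ?_⟩
  rw [Zsum α n hn]
  have hper : ∀ k ∈ Finset.range (n+1),
      ‖pt n k - pt m j‖ ^ (-(2+α))
        = (((d:ℝ))^2 + 4*(n:ℝ)*(m:ℝ)*(Real.sin (Real.pi*((k:ℝ)/((n:ℝ)+1) - (j:ℝ)/((m:ℝ)+1)))^2)) ^ (-(2+α)/2) := by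
    intro k hk
    have h2 := dist_sq n m k j
    rw [hD] at h2
    rw [← rpow_sq_neg (‖pt n k - pt m j‖) (norm_nonneg _) (2+α), h2]
  rw [Finset.sum_congr rfl hper]
  exact hbij (fun s => (((d:ℝ))^2 + 4*(n:ℝ)*(m:ℝ)*s) ^ (-(2+α)/2))

end ZP


set_option maxHeartbeats 1000000 in
/-- two-sided bounds on `Z_n(x)` for `x ∈ C_m`, `m ≠ n`. -/
theorem Zcirc_bounds (α : ℝ) (hα : 0 < α) :
    ∃ a : ℝ, 1 < a ∧ ∀ m n : ℕ, 1 ≤ m → 1 ≤ n → m ≠ n → ∀ x ∈ circFin m,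
      (m < n →
        a⁻¹ * ((n : ℝ) - (m : ℝ)) ^ (-(1 + α)) ≤ Zcirc α n x ∧
        Zcirc α n x ≤ a * ((n : ℝ) - (m : ℝ)) ^ (-(1 + α))) ∧
      (n < m →
        a⁻¹ * ((n : ℝ) / ((m : ℝ) * ((m : ℝ) - (n : ℝ)) ^ (1 + α))) ≤ Zcirc α n x ∧
        Zcirc α n x ≤ a * ((n : ℝ) / ((m : ℝ) * ((m : ℝ) - (n : ℝ)) ^ (1 + α)))) := by
  classical
  refine ⟨16 * (20:ℝ)^(2+α), ?_, ?_⟩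
  · have h1 : (1:ℝ) ≤ (20:ℝ)^(2+α) := by
      have := Real.rpow_le_rpow_of_exponent_le (by norm_num : (1:ℝ) ≤ 20) (by linarith : (0:ℝ) ≤ 2+α)
      rwa [Real.rpow_zero] at this
    nlinarith
  intro m n hm hn hmn x hx
  obtain ⟨j, hj, rfl⟩ := ZP.mem_circFin hx
  have ha16 : (16:ℝ) ≤ 16 * (20:ℝ)^(2+α) := by
    have h1 : (1:ℝ) ≤ (20:ℝ)^(2+α) := by
      have := Real.rpow_le_rpow_of_exponent_le (by norm_num : (1:ℝ) ≤ 20) (by linarith : (0:ℝ) ≤ 2+α)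
      rwa [Real.rpow_zero] at this
    nlinarith
  have ha0 : (0:ℝ) < 16 * (20:ℝ)^(2+α) := by
    have := Real.rpow_pos_of_pos (by norm_num : (0:ℝ) < 20) (2+α)
    nlinarith
  constructor
  · -- m < n
    intro hlt
    have hd1 : 1 ≤ n - m := by omega
    have hdn : n - m ≤ n := by omega
    have hcast : ((n:ℝ) - (m:ℝ)) = (((n - m : ℕ)):ℝ) := by
      rw [Nat.cast_sub hlt.le]
    have hd0 : (0:ℝ) < ((n-m:ℕ):ℝ) := by exact_mod_cast hd1
    obtain ⟨γ, hγ0, hγ1, hZ⟩ := ZP.Z_repr α n m j (n-m) hn (by rw [hcast])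
    rw [hcast]
    constructor
    · rw [hZ]
      exact ZP.coreLower α hα n m (n-m) γ hγ0 hγ1 hn hm hd1 hdn (by omega)
    · by_cases hcomp : n < 4 * m
      · rw [hZ]
        have h6 := ZP.coreUpper α hα n m (n-m) γ hγ0 hγ1 hn hm hd1 hdn hcomp
        have h7 : 0 ≤ ((n-m:ℕ):ℝ)^(-(1+α)) := Real.rpow_nonneg hd0.le _
        nlinarith
      · push_neg at hcomp
        have htriv := ZP.triv_upper α hα n m j hn ((n-m:ℕ):ℝ) hd0
          (by rw [← hcast]; exact le_abs_self _)
        have h3d : ((n:ℝ)+1) ≤ 3*((n-m:ℕ):ℝ) := by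
          have : n+1 ≤ 3*(n-m) := by omega
          exact_mod_cast this
        have hmul := ZP.d_mul_rpow α ((n-m:ℕ):ℝ) hd0
        have h8 : 0 ≤ ((n-m:ℕ):ℝ)^(-(2+α)) := Real.rpow_nonneg hd0.le _
        have h9 : 0 ≤ ((n-m:ℕ):ℝ)^(-(1+α)) := Real.rpow_nonneg hd0.le _
        calc Zcirc α n (ZP.pt m j) ≤ ((n:ℝ)+1) * ((n-m:ℕ):ℝ)^(-(2+α)) := htriv
          _ ≤ 3*((n-m:ℕ):ℝ) * ((n-m:ℕ):ℝ)^(-(2+α)) := mul_le_mul_of_nonneg_right h3d h8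
          _ = 3 * ((n-m:ℕ):ℝ)^(-(1+α)) := by rw [mul_assoc, hmul]
          _ ≤ 16 * (20:ℝ)^(2+α) * ((n-m:ℕ):ℝ)^(-(1+α)) := by nlinarith
  · -- n < m
    intro hlt
    have hd1 : 1 ≤ m - n := by omega
    have hcast : ((m:ℝ) - (n:ℝ)) = (((m - n : ℕ)):ℝ) := by
      rw [Nat.cast_sub hlt.le]
    have hd0 : (0:ℝ) < ((m-n:ℕ):ℝ) := by exact_mod_cast hd1
    have hm0 : (0:ℝ) < (m:ℝ) := by exact_mod_cast hm
    have hn0 : (0:ℝ) < (n:ℝ) := by exact_mod_cast hn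
    have hDsq : ((n:ℝ) - (m:ℝ))^2 = (((m-n:ℕ)):ℝ)^2 := by
      rw [← hcast]; ring
    obtain ⟨γ, hγ0, hγ1, hZ⟩ := ZP.Z_repr α n m j (m-n) hn hDsq
    have hTeq : (n:ℝ) / ((m:ℝ) * ((m:ℝ)-(n:ℝ))^(1+α))
        = ((n:ℝ)/(m:ℝ)) * ((m-n:ℕ):ℝ)^(-(1+α)) := by
      rw [hcast, Real.rpow_neg hd0.le]
      ring
    rw [hTeq]
    have hdP0 : (0:ℝ) < ((m-n:ℕ):ℝ)^(-(1+α)) := Real.rpow_pos_of_pos hd0 _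
    have hnm0 : (0:ℝ) < (n:ℝ)/m := by positivity
    constructor
    · -- lower bound
      by_cases h2n : m < 2*n
      · have hcore := ZP.coreLower α hα n m (m-n) γ hγ0 hγ1 hn hm hd1 (by omega) (by omega)
        rw [← hZ] at hcore
        have h1 : (n:ℝ)/m ≤ 1 := by
          rw [div_le_one hm0]
          exact_mod_cast hlt.le
        calc (16 * (20:ℝ)^(2+α))⁻¹ * ((n:ℝ)/m * ((m-n:ℕ):ℝ)^(-(1+α)))
            ≤ (16 * (20:ℝ)^(2+α))⁻¹ * (1 * ((m-n:ℕ):ℝ)^(-(1+α))) := by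
              apply mul_le_mul_of_nonneg_left ?_ (by positivity)
              exact mul_le_mul_of_nonneg_right h1 hdP0.le
          _ = (16 * (20:ℝ)^(2+α))⁻¹ * ((m-n:ℕ):ℝ)^(-(1+α)) := by ring
          _ ≤ Zcirc α n (ZP.pt m j) := hcore
      · push_neg at h2n
        have htl := ZP.triv_lower α hα n m j hn (by
          have : (n:ℝ) < m := by exact_mod_cast hlt
          linarith)
        have hp : -(2+α) ≤ 0 := by linarith
        have hP : -(1+α) ≤ 0 := by linarith
        have hnmpos : (0:ℝ) < (n:ℝ)+m := by linarith
        have c1 : ((2:ℝ)*m)^(-(2+α)) ≤ ((n:ℝ)+(m:ℝ))^(-(2+α)) :=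
          ZP.rpow_anti hnmpos (by linarith) hp
        have hm2d : (m:ℝ) ≤ 2*((m-n:ℕ):ℝ) := by
          have : m ≤ 2*(m-n) := by omega
          exact_mod_cast this
        have c2 : ((2:ℝ)*((m-n:ℕ):ℝ))^(-(1+α)) ≤ (m:ℝ)^(-(1+α)) :=
          ZP.rpow_anti hm0 hm2d hP
        have e1 : ((2:ℝ)*m)^(-(2+α)) = (2:ℝ)^(-(2+α)) * (m:ℝ)^(-(2+α)) :=
          Real.mul_rpow (by norm_num) hm0.le
        have e2 : (m:ℝ)^(-(2+α)) = (m:ℝ)⁻¹ * (m:ℝ)^(-(1+α)) := by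
          rw [show -(2+α) = (-1) + -(1+α) by ring, Real.rpow_add hm0, Real.rpow_neg_one]
        have e3 : ((2:ℝ)*((m-n:ℕ):ℝ))^(-(1+α)) = (2:ℝ)^(-(1+α)) * ((m-n:ℕ):ℝ)^(-(1+α)) :=
          Real.mul_rpow (by norm_num) hd0.le
        have hA : (16 * (20:ℝ)^(2+α))⁻¹ ≤ (2:ℝ)^(-(2+α)) * (2:ℝ)^(-(1+α)) := by
          have f1 : (2:ℝ)^(-(2+α)) * (2:ℝ)^(-(1+α)) = (2:ℝ)^(-(3+2*α)) := by
            rw [← Real.rpow_add (by norm_num : (0:ℝ) < 2)]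
            ring_nf
          have f2 : (2:ℝ)^((3:ℝ)+2*α) ≤ (4:ℝ)^(2+α) := by
            have g1 : (2:ℝ)^((3:ℝ)+2*α) ≤ (2:ℝ)^((2:ℝ)*(2+α)) :=
              Real.rpow_le_rpow_of_exponent_le (by norm_num) (by linarith)
            have h24 : (2:ℝ)^((2:ℝ)) = 4 := by
              norm_num
            have g2 : (2:ℝ)^((2:ℝ)*(2+α)) = (4:ℝ)^(2+α) := by
              rw [Real.rpow_mul (by norm_num : (0:ℝ) ≤ 2), h24]
            linarith [g1, le_of_eq g2]
          have f3 : (4:ℝ)^(2+α) ≤ 16 * (20:ℝ)^(2+α) := by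
            have g3 : (4:ℝ)^(2+α) ≤ (20:ℝ)^(2+α) :=
              Real.rpow_le_rpow (by norm_num) (by norm_num) (by linarith)
            have g4 : (0:ℝ) < (20:ℝ)^(2+α) := Real.rpow_pos_of_pos (by norm_num) _
            nlinarith
          have f4 : (0:ℝ) < (2:ℝ)^((3:ℝ)+2*α) := Real.rpow_pos_of_pos (by norm_num) _
          have f5 : (16 * (20:ℝ)^(2+α))⁻¹ ≤ ((2:ℝ)^((3:ℝ)+2*α))⁻¹ :=
            inv_anti₀ f4 (le_trans f2 f3)
          have f6 : ((2:ℝ)^((3:ℝ)+2*α))⁻¹ = (2:ℝ)^(-(3+2*α)) := by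
            rw [← Real.rpow_neg (by norm_num : (0:ℝ) ≤ 2)]
          rw [f1]
          linarith [f5, le_of_eq f6]
        -- assemble the chain
        have hnplus : (n:ℝ) ≤ (n:ℝ)+1 := by linarith
        have hq2p : (0:ℝ) < (2:ℝ)^(-(2+α)) := Real.rpow_pos_of_pos (by norm_num) _
        have hq1p : (0:ℝ) < (2:ℝ)^(-(1+α)) := Real.rpow_pos_of_pos (by norm_num) _
        calc (16 * (20:ℝ)^(2+α))⁻¹ * ((n:ℝ)/m * ((m-n:ℕ):ℝ)^(-(1+α)))
            ≤ ((2:ℝ)^(-(2+α)) * (2:ℝ)^(-(1+α))) * ((n:ℝ)/m * ((m-n:ℕ):ℝ)^(-(1+α))) := by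
              apply mul_le_mul_of_nonneg_right hA (by positivity)
          _ = ((n:ℝ)) * ((2:ℝ)^(-(2+α)) * ((m:ℝ)⁻¹ * ((2:ℝ)^(-(1+α)) * ((m-n:ℕ):ℝ)^(-(1+α))))) := by
              ring
          _ ≤ ((n:ℝ)+1) * ((2:ℝ)^(-(2+α)) * ((m:ℝ)⁻¹ * ((2:ℝ)^(-(1+α)) * ((m-n:ℕ):ℝ)^(-(1+α))))) := by
              apply mul_le_mul_of_nonneg_right hnplus (by positivity)
          _ = ((n:ℝ)+1) * ((2:ℝ)^(-(2+α)) * ((m:ℝ)⁻¹ * (((2:ℝ)*((m-n:ℕ):ℝ))^(-(1+α))))) := by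
              rw [e3]
          _ ≤ ((n:ℝ)+1) * ((2:ℝ)^(-(2+α)) * ((m:ℝ)⁻¹ * ((m:ℝ)^(-(1+α))))) := by
              exact mul_le_mul_of_nonneg_left
                (mul_le_mul_of_nonneg_left
                  (mul_le_mul_of_nonneg_left c2 (by positivity)) hq2p.le) (by positivity)
          _ = ((n:ℝ)+1) * ((2:ℝ)*m)^(-(2+α)) := by
              rw [e1, e2]
          _ ≤ ((n:ℝ)+1) * ((n:ℝ)+(m:ℝ))^(-(2+α)) := by
              apply mul_le_mul_of_nonneg_left c1 (by positivity)
          _ ≤ Zcirc α n (ZP.pt m j) := htl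
    · -- upper bound
      by_cases h2n : m < 2*n
      · rw [hZ]
        have hcore := ZP.coreUpper α hα n m (m-n) γ hγ0 hγ1 hn hm hd1 (by omega) (by omega)
        have h12 : (1:ℝ)/2 ≤ (n:ℝ)/m := by
          rw [div_le_div_iff₀ (by norm_num) hm0]
          have : (m:ℝ) ≤ 2*n := by exact_mod_cast h2n.le
          linarith
        have h6 : (6:ℝ) ≤ (16 * (20:ℝ)^(2+α)) * ((n:ℝ)/m) := by
          nlinarith
        calc ∑ i ∈ Finset.range (n+1),
              ((((m-n:ℕ):ℝ))^2 + 4*(n:ℝ)*(m:ℝ)*(Real.sin (Real.pi*((i:ℝ)+γ)/((n:ℝ)+1)))^2) ^ (-(2+α)/2)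
            ≤ 6 * ((m-n:ℕ):ℝ)^(-(1+α)) := hcore
          _ ≤ ((16 * (20:ℝ)^(2+α)) * ((n:ℝ)/m)) * ((m-n:ℕ):ℝ)^(-(1+α)) :=
              mul_le_mul_of_nonneg_right h6 hdP0.le
          _ = 16 * (20:ℝ)^(2+α) * ((n:ℝ)/m * ((m-n:ℕ):ℝ)^(-(1+α))) := by ring
      · push_neg at h2n
        have htriv := ZP.triv_upper α hα n m j hn ((m-n:ℕ):ℝ) hd0
          (by rw [show |(n:ℝ)-(m:ℝ)| = |(m:ℝ)-(n:ℝ)| by rw [abs_sub_comm], hcast]; exact le_abs_self _)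
        have hmul := ZP.d_mul_rpow α ((m-n:ℕ):ℝ) hd0
        have h8 : (0:ℝ) < ((m-n:ℕ):ℝ)^(-(2+α)) := Real.rpow_pos_of_pos hd0 _
        have hm2d : (m:ℝ) ≤ 2*((m-n:ℕ):ℝ) := by
          have : m ≤ 2*(m-n) := by omega
          exact_mod_cast this
        have hn12 : ((n:ℝ)+1) ≤ 2*n := by
          have : (1:ℝ) ≤ n := by exact_mod_cast hn
          linarith
        have hkey : ((n:ℝ)+1) ≤ 4*((n:ℝ)/m)*((m-n:ℕ):ℝ) := by
          rw [show 4*((n:ℝ)/m)*((m-n:ℕ):ℝ) = 4*(n:ℝ)*((m-n:ℕ):ℝ)/m by ring, le_div_iff₀ hm0]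
          nlinarith
        calc Zcirc α n (ZP.pt m j) ≤ ((n:ℝ)+1) * ((m-n:ℕ):ℝ)^(-(2+α)) := htriv
          _ ≤ (4*((n:ℝ)/m)*((m-n:ℕ):ℝ)) * ((m-n:ℕ):ℝ)^(-(2+α)) :=
              mul_le_mul_of_nonneg_right hkey h8.le
          _ = 4*((n:ℝ)/m) * (((m-n:ℕ):ℝ) * ((m-n:ℕ):ℝ)^(-(2+α))) := by ring
          _ = 4*((n:ℝ)/m) * ((m-n:ℕ):ℝ)^(-(1+α)) := by rw [hmul]
          _ ≤ 16 * (20:ℝ)^(2+α) * ((n:ℝ)/m * ((m-n:ℕ):ℝ)^(-(1+α))) := by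
              have h10 : (4:ℝ) ≤ 16 * (20:ℝ)^(2+α) := by linarith
              have h11 : 0 ≤ ((n:ℝ)/m) * ((m-n:ℕ):ℝ)^(-(1+α)) := by positivity
              calc 4*((n:ℝ)/m) * ((m-n:ℕ):ℝ)^(-(1+α))
                  = 4 * (((n:ℝ)/m) * ((m-n:ℕ):ℝ)^(-(1+α))) := by ring
                _ ≤ 16 * (20:ℝ)^(2+α) * (((n:ℝ)/m) * ((m-n:ℕ):ℝ)^(-(1+α))) :=
                  mul_le_mul_of_nonneg_right h10 h11
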